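/- Let L be a finite index set and f : [0,1]^L → ℝ be an aggregation function that is symmetric (invariant under permutations of coordinates), monotone (pointwise s' ≥ s implies f(s') ≥ f(s)), homogeneous (f(λ·s) = λ f(s) for all λ ≥ 0 with λ·s ∈ [0,1]^L), and independent (for any partition L = J ∪ K, f(s_J, s_K) - f(s_J, s'_K) = f(s'_J, s_K) - f(s'_J, s'_K)). Then there exists λ ≥ 0 such that f(s) = λ · ∑_{l∈L} s_l for all s. Conversely, every such scaled sum satisfies these four properties. -/

import Mathlib

open Finset

/-- `s` lies in the domain `[0,1]^L`. -/
def InDom {L : Type*} (s : L → ℝ) : Prop := ∀ l, 0 ≤ s l ∧ s l ≤ 1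

/-- combine coordinates: those in `J` from `u`, the rest from `v`. -/
def combine {L : Type*} (J : Finset L) [DecidableEq L] (u v : L → ℝ) : L → ℝ :=
  fun l => if l ∈ J then u l else v l

def Symmetric' {L : Type*} (f : (L → ℝ) → ℝ) : Prop :=
  ∀ (π : Equiv.Perm L) (s : L → ℝ), InDom s → f (s ∘ π) = f s

def Monotone' {L : Type*} (f : (L → ℝ) → ℝ) : Prop :=
  ∀ s s' : L → ℝ, InDom s → InDom s' → (∀ l, s l ≤ s' l) → f s ≤ f s'

def Homogeneous' {L : Type*} (f : (L → ℝ) → ℝ) : Prop :=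
  ∀ (c : ℝ) (s : L → ℝ), 0 ≤ c → InDom s → InDom (fun l => c * s l) →
    f (fun l => c * s l) = c * f s

def Independent' {L : Type*} [DecidableEq L] (f : (L → ℝ) → ℝ) : Prop :=
  ∀ (J : Finset L) (u u' v v' : L → ℝ), InDom u → InDom u' → InDom v → InDom v' →
    f (combine J u v) - f (combine J u v') = f (combine J u' v) - f (combine J u' v')

set_option linter.unusedSectionVars false

section Aux
variable {L : Type*} [DecidableEq L]

/-- the vector with value `t` at coordinate `l` and `0` elsewhere. -/
def sing (t : ℝ) (l : L) : L → ℝ := fun x => if x = l then t else 0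

lemma indom_zero : InDom (fun _ : L => (0:ℝ)) := fun _ => ⟨le_refl 0, zero_le_one⟩

lemma indom_sing {t : ℝ} (h0 : 0 ≤ t) (h1 : t ≤ 1) (l : L) : InDom (sing t l) := by
  intro x; unfold sing; split
  · exact ⟨h0, h1⟩
  · exact ⟨le_refl 0, zero_le_one⟩

lemma indom_combine (J : Finset L) {u v : L → ℝ} (hu : InDom u) (hv : InDom v) :
    InDom (combine J u v) := by
  intro l; unfold combine; split
  exacts [hu l, hv l]

lemma f_zero {f : (L → ℝ) → ℝ} (hhom : Homogeneous' f) : f (fun _ => 0) = 0 := by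
  have := hhom 0 (fun _ => 0) le_rfl indom_zero (by simpa using (indom_zero (L := L)))
  simpa using this

lemma sum_rep {f : (L → ℝ) → ℝ} (hhom : Homogeneous' f) (hind : Independent' f)
    (s : L → ℝ) (hs : InDom s) (S : Finset L) :
    f (combine S s (fun _ => 0)) = ∑ l ∈ S, f (sing (s l) l) := by
  induction S using Finset.induction_on with
  | empty =>
      have h0 : combine (∅ : Finset L) s (fun _ => 0) = (fun _ => 0) := by
        funext l; simp [combine]
      simp [h0, f_zero hhom]
  | insert a S ha ih =>
      have key := hind {a} s (fun _ => 0) (combine S s (fun _ => 0)) (fun _ => 0)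
        hs indom_zero (indom_combine _ hs indom_zero) indom_zero
      have e1 : combine {a} s (combine S s (fun _ => 0)) = combine (insert a S) s (fun _ => 0) := by
        funext l
        by_cases h : l = a <;> simp [combine, h]
      have e2 : combine {a} s (fun _ => 0) = sing (s a) a := by
        funext l
        by_cases h : l = a <;> simp [combine, sing, h]
      have e3 : combine {a} (fun _ => 0) (combine S s (fun _ => 0)) = combine S s (fun _ => 0) := by
        funext l
        by_cases h : l = a
        · subst h; simp [combine, ha]
        · simp [combine, h]
      have e4 : combine {a} (fun (_ : L) => (0:ℝ)) (fun _ => 0) = (fun _ => 0) := by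
        funext l; simp [combine]
      rw [e1, e2, e3, e4, f_zero hhom] at key
      rw [Finset.sum_insert ha, ← ih]
      linarith

end Aux

theorem stmt0 {L : Type*} [Fintype L] [DecidableEq L] (f : (L → ℝ) → ℝ) :
    (Symmetric' f ∧ Monotone' f ∧ Homogeneous' f ∧ Independent' f) ↔
    ∃ lam : ℝ, 0 ≤ lam ∧ ∀ s : L → ℝ, InDom s → f s = lam * ∑ l, s l := by
  constructor
  · rintro ⟨hsym, hmon, hhom, hind⟩
    rcases isEmpty_or_nonempty L with hL | hL
    · refine ⟨0, le_rfl, fun s hs => ?_⟩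
      have hs0 : s = (fun _ => 0) := funext fun l => (hL.elim l)
      rw [hs0, f_zero hhom]; simp
    · obtain ⟨l0⟩ := hL
      refine ⟨f (sing 1 l0), ?_, ?_⟩
      · have := hmon (fun _ => 0) (sing 1 l0) indom_zero
          (indom_sing zero_le_one le_rfl l0) (fun l => (indom_sing zero_le_one le_rfl l0 l).1)
        rwa [f_zero hhom] at this
      · intro s hs
        have huniv : combine (univ : Finset L) s (fun _ => 0) = s := by
          funext l; simp [combine]
        have h1 := sum_rep hhom hind s hs univ
        rw [huniv] at h1
        have h2 : ∀ l : L, f (sing (s l) l) = s l * f (sing 1 l0) := by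
          intro l
          have hsc : (fun x => s l * sing 1 l x) = sing (s l) l := by
            funext x; simp only [sing, mul_ite, mul_one, mul_zero]
          have hh := hhom (s l) (sing 1 l) (hs l).1 (indom_sing zero_le_one le_rfl l)
            (by rw [hsc]; exact indom_sing (hs l).1 (hs l).2 l)
          rw [hsc] at hh
          have hperm : (sing (1:ℝ) l0) ∘ (Equiv.swap l l0) = sing 1 l := by
            funext x
            simp only [Function.comp, sing]
            by_cases h : x = l
            · subst h; simp [Equiv.swap_apply_left]
            · by_cases h2 : x = l0
              · subst h2; simp [Equiv.swap_apply_right, eq_comm, h]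
              · simp [Equiv.swap_apply_of_ne_of_ne h h2, h, h2]
          have hsy := hsym (Equiv.swap l l0) (sing 1 l0) (indom_sing zero_le_one le_rfl l0)
          rw [hperm] at hsy
          rw [hh, hsy]
        rw [h1]
        rw [Finset.sum_congr rfl (fun l _ => h2 l), ← Finset.sum_mul]
        ring
  · rintro ⟨lam, hlam, hf⟩
    have hsum : ∀ (J : Finset L) (u v : L → ℝ),
        ∑ l, combine J u v l = (∑ l ∈ univ.filter (· ∈ J), u l)
          + ∑ l ∈ univ.filter (¬ · ∈ J), v l := by
      intro J u v
      simp only [combine]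
      exact Finset.sum_ite _ _
    refine ⟨?_, ?_, ?_, ?_⟩
    · intro π s hsd
      have hsd' : InDom (s ∘ π) := fun l => hsd (π l)
      rw [hf _ hsd', hf _ hsd]
      congr 1
      exact Equiv.sum_comp π s
    · intro s s' hsd hsd' hle
      rw [hf _ hsd, hf _ hsd']
      exact mul_le_mul_of_nonneg_left (Finset.sum_le_sum fun l _ => hle l) hlam
    · intro c s hc hsd hcsd
      rw [hf _ hsd, hf _ hcsd,
        show (∑ l, c * s l) = c * ∑ l, s l from (Finset.mul_sum _ _ _).symm]
      ring
    · intro J u u' v v' hu hu' hv hv'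
      rw [hf _ (indom_combine J hu hv), hf _ (indom_combine J hu hv'),
        hf _ (indom_combine J hu' hv), hf _ (indom_combine J hu' hv'),
        hsum J u v, hsum J u v', hsum J u' v, hsum J u' v']
      ring
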